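/- Let X be a finite set and f, g : X → X bijections with f ∘ g = g ∘ f, and let G be the group presented by generating set X with relations x·y = g(y)·f(x) for all x, y ∈ X (the structure group of the permutation solution S(x,y) = (g(y), f(x))). If x, x' ∈ X satisfy (f ∘ g)^k(x) = x' for some integer k ≥ 0, then the images of x and x' in G are equal. -/

import Mathlib

namespace YBE

/-- `(X,S)` is non-degenerate: all the maps `g_x = y ↦ S(x,y).1` and
`f_y = x ↦ S(x,y).2` are bijective. -/
def Nondegenerate {X : Type*} (S : X × X → X × X) : Prop :=
  (∀ x : X, Function.Bijective fun y => (S (x, y)).1) ∧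
  (∀ y : X, Function.Bijective fun x => (S (x, y)).2)

/-- `(X,S)` is involutive: `S ∘ S = id`. -/
def InvolutiveSol {X : Type*} (S : X × X → X × X) : Prop := S ∘ S = id

/-- `S¹² = S × id` on `X × X × X`. -/
def S12 {X : Type*} (S : X × X → X × X) : X × X × X → X × X × X :=
  fun p => ((S (p.1, p.2.1)).1, (S (p.1, p.2.1)).2, p.2.2)

/-- `S²³ = id × S` on `X × X × X`. -/
def S23 {X : Type*} (S : X × X → X × X) : X × X × X → X × X × X :=
  fun p => (p.1, S (p.2.1, p.2.2))

/-- `(X,S)` is braided: `S¹² ∘ S²³ ∘ S¹² = S²³ ∘ S¹² ∘ S²³`. -/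
def BraidedSol {X : Type*} (S : X × X → X × X) : Prop :=
  S12 S ∘ S23 S ∘ S12 S = S23 S ∘ S12 S ∘ S23 S

/-- The map `g_x : y ↦ S(x,y).1`. -/
def gmap {X : Type*} (S : X × X → X × X) (x : X) : X → X := fun y => (S (x, y)).1

/-- The map `f_y : x ↦ S(x,y).2`. -/
def fmap {X : Type*} (S : X × X → X × X) (y : X) : X → X := fun x => (S (x, y)).2

/-- The inverse `g_x⁻¹` of the (bijective) map `g_x`. -/
noncomputable def ginv {X : Type*} [Nonempty X] (S : X × X → X × X) (x : X) : X → X :=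
  Function.invFun (gmap S x)

/-- The inverse `f_y⁻¹` of the (bijective) map `f_y`. -/
noncomputable def finv {X : Type*} [Nonempty X] (S : X × X → X × X) (y : X) : X → X :=
  Function.invFun (fmap S y)

/-- The defining relations of the structure monoid: `x·y = t·z` whenever `S(x,y) = (t,z)`. -/
def ybRel {X : Type*} (S : X × X → X × X) : FreeMonoid X → FreeMonoid X → Prop :=
  fun a b => ∃ x y : X, a = FreeMonoid.of x * FreeMonoid.of y ∧
    b = FreeMonoid.of (S (x, y)).1 * FreeMonoid.of (S (x, y)).2

/-- The structure monoid of `(X,S)`: the monoid presented by generating set `X` and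
relations `x·y = t·z` for each `x,y,t,z` with `S(x,y) = (t,z)`. -/
abbrev StructureMonoid {X : Type*} (S : X × X → X × X) : Type _ :=
  (conGen (ybRel S)).Quotient

/-- The image in the structure monoid of a generator `x ∈ X`. -/
def smi {X : Type*} (S : X × X → X × X) (x : X) : StructureMonoid S :=
  (conGen (ybRel S)).mk' (FreeMonoid.of x)

/-- The defining relations of the structure group, as elements of the free group. -/
def ybGRels {X : Type*} (S : X × X → X × X) : Set (FreeGroup X) :=
  {w | ∃ x y : X, w = FreeGroup.of x * FreeGroup.of y *
    (FreeGroup.of (S (x, y)).1 * FreeGroup.of (S (x, y)).2)⁻¹}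

/-- The structure group of `(X,S)`: the group presented by generating set `X` and
relations `x·y = t·z` for each `x,y,t,z` with `S(x,y) = (t,z)`. -/
abbrev StructureGroup {X : Type*} (S : X × X → X × X) : Type _ :=
  PresentedGroup (ybGRels S)

/-- `a` left-divides `b`. -/
def LDvd {M : Type*} [Monoid M] (a b : M) : Prop := ∃ c, b = a * c

/-- `m` is a right lcm of the family `a`: each `a i` left-divides `m`, and `m`
left-divides every common right multiple of the `a i`. -/
def IsRightLcm {M : Type*} [Monoid M] {ι : Sort*} (a : ι → M) (m : M) : Prop :=
  (∀ i, LDvd (a i) m) ∧ ∀ w, (∀ i, LDvd (a i) w) → LDvd m w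

/-- The defining relations of the structure group of the permutation solution
`S(x,y) = (g(y), f(x))`: `x·y = g(y)·f(x)` for all `x, y ∈ X`. -/
def permRels {X : Type*} (f g : X → X) : Set (FreeGroup X) :=
  {w | ∃ x y : X, w = FreeGroup.of x * FreeGroup.of y *
    (FreeGroup.of (g y) * FreeGroup.of (f x))⁻¹}

/-- The relation `x ≡ x′` iff `(f ∘ g)^[k] x = x′` for some `k ≥ 0`. -/
def pgRel {X : Type*} (f g : X → X) : X → X → Prop :=
  fun a b => ∃ k : ℕ, (f ∘ g)^[k] a = b


/-- In the structure group of a (not necessarily involutive) permutation solution, two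
generators in the same `(f ∘ g)`-orbit become equal. -/
theorem stmt16 {X : Type*} [Finite X] (f g : X → X)
    (hf : Function.Bijective f) (hg : Function.Bijective g) (hc : f ∘ g = g ∘ f)
    (x x' : X) (k : ℕ) (h : (f ∘ g)^[k] x = x') :
    (PresentedGroup.of x : PresentedGroup (permRels f g)) = PresentedGroup.of x' := by
  have rel : ∀ a b : X, (PresentedGroup.of a * PresentedGroup.of b :
      PresentedGroup (permRels f g)) = PresentedGroup.of (g b) * PresentedGroup.of (f a) := by
    intro a b
    have h1 : ((QuotientGroup.mk (FreeGroup.of a * FreeGroup.of b *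
        (FreeGroup.of (g b) * FreeGroup.of (f a))⁻¹ : FreeGroup X)) :
        PresentedGroup (permRels f g)) = 1 := by
      rw [QuotientGroup.eq_one_iff]
      exact Subgroup.subset_normalClosure ⟨a, b, rfl⟩
    have h2 : ((QuotientGroup.mk (FreeGroup.of a * FreeGroup.of b) : PresentedGroup (permRels f g)))
        = QuotientGroup.mk (FreeGroup.of (g b) * FreeGroup.of (f a)) := by
      rw [← mul_inv_eq_one]
      simpa using h1
    exact h2
  have step : ∀ u : X, (PresentedGroup.of u : PresentedGroup (permRels f g)) =
      PresentedGroup.of (f (g u)) := by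
    intro u
    have := rel (g u) u
    exact mul_left_cancel this
  subst h
  induction k with
  | zero => simp
  | succ n ih =>
    rw [Function.iterate_succ_apply']
    exact ih.trans (step _)
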